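/- arXiv:1906.10333 — 2 statements merged into one kernel-verified Lean document; each statement's English description precedes it below -/
import Mathlib

section
/- Let X be a (possibly infinite) set of alternatives. A stochastic choice dataset P is rationalizable by a probability measure over strict total orders of X if and only if P satisfies the Axiom of Revealed Stochastic Preference. -/
open MeasureTheory

attribute [local instance] Classical.propDecidable

/-- The space of strict total orders on `X`: irreflexive, transitive relations under
which any two distinct elements are comparable. -/
def StrictTotalOrders (X : Type*) : Type _ :=
  {r : X → X → Prop //
    (∀ a, ¬ r a a) ∧ (∀ a b c, r a b → r b c → r a c) ∧ ∀ a b, a ≠ b → r a b ∨ r b a}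

/-- The σ-algebra on the space of strict total orders generated by the events fixing
the relative order of finitely many distinct elements. -/
instance ordersMeasurableSpace (X : Type*) : MeasurableSpace (StrictTotalOrders X) :=
  MeasurableSpace.generateFrom
    {s | ∃ l : List X, l.Nodup ∧ s = {π : StrictTotalOrders X | l.Chain' π.1}}

/-- `P` is a stochastic choice dataset on the collection `𝒜` of (finite, nonempty)
menus: choice probabilities are nonnegative and sum to one over each menu. -/
def IsStochasticDataset {X : Type*} (𝒜 : Set (Finset X)) (P : Finset X → X → ℝ) : Prop :=
  ∀ A ∈ 𝒜, A.Nonempty ∧ (∀ x ∈ A, 0 ≤ P A x) ∧ ∑ x ∈ A, P A x = 1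

/-- `P` is rationalizable: there is a probability measure `ν` over strict total orders
of `X` such that the probability that `x` beats every other element of `A` equals
`P A x` for every menu `A ∈ 𝒜` and `x ∈ A`. -/
def StochRationalizable {X : Type*} (𝒜 : Set (Finset X)) (P : Finset X → X → ℝ) : Prop :=
  ∃ ν : Measure (StrictTotalOrders X), IsProbabilityMeasure ν ∧
    ∀ A ∈ 𝒜, ∀ x ∈ A,
      ν {π : StrictTotalOrders X | ∀ y ∈ A, y ≠ x → π.1 x y} = ENNReal.ofReal (P A x)

/-- The Axiom of Revealed Stochastic Preference: for every finite sequence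
`(A₁,x₁),…,(A_n,x_n)` from the domain of `P` (repetitions allowed),
`∑ᵢ P(Aᵢ,xᵢ)` is at most the maximum, over strict total orders, of the number of
indices `i` such that `xᵢ` is top-ranked in `Aᵢ`. -/
def ARSP {X : Type*} (𝒜 : Set (Finset X)) (P : Finset X → X → ℝ) : Prop :=
  ∀ (n : ℕ) (A : Fin n → Finset X) (x : Fin n → X),
    (∀ i, A i ∈ 𝒜 ∧ x i ∈ A i) →
    ∃ π : StrictTotalOrders X,
      ∑ i, P (A i) (x i) ≤
        ((Finset.univ.filter fun i : Fin n => ∀ y ∈ A i, y ≠ x i → π.1 (x i) y).card : ℝ)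

namespace MR
open scoped ENNReal
variable {X : Type*}

variable {X : Type*}

lemma asymm (π : StrictTotalOrders X) {a b : X} (h : π.1 a b) : ¬ π.1 b a :=
  fun h' => π.2.1 a (π.2.2.1 a b a h h')

lemma exists_top (π : StrictTotalOrders X) (A : Finset X) (hA : A.Nonempty) :
    ∃ x ∈ A, ∀ y ∈ A, y ≠ x → π.1 x y := by
  classical
  induction A using Finset.induction_on with
  | empty => exact absurd hA (by simp)
  | @insert a s ha ih =>
    rcases s.eq_empty_or_nonempty with rfl | hs
    · exact ⟨a, by simp, by simp⟩
    · obtain ⟨x, hxs, hx⟩ := ih hs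
      by_cases hax : π.1 a x
      · refine ⟨a, by simp, ?_⟩
        intro y hy hya
        rcases Finset.mem_insert.1 hy with rfl | hys
        · exact absurd rfl hya
        · by_cases hyx : y = x
          · subst hyx; exact hax
          · exact π.2.2.1 a x y hax (hx y hys hyx)
      · have hxa : x ≠ a := fun h => ha (h ▸ hxs)
        have : π.1 x a := by
          rcases π.2.2.2 a x (fun h => hxa h.symm) with h | h
          · exact absurd h hax
          · exact h
        refine ⟨x, Finset.mem_insert_of_mem hxs, ?_⟩
        intro y hy hyx
        rcases Finset.mem_insert.1 hy with rfl | hys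
        · exact this
        · exact hx y hys hyx

lemma top_unique (π : StrictTotalOrders X) (A : Finset X) {x₁ x₂ : X}
    (h₁ : x₁ ∈ A ∧ ∀ y ∈ A, y ≠ x₁ → π.1 x₁ y) (h₂ : x₂ ∈ A ∧ ∀ y ∈ A, y ≠ x₂ → π.1 x₂ y) :
    x₁ = x₂ := by
  by_contra hne
  exact asymm π (h₁.2 x₂ h₂.1 (Ne.symm hne)) (h₂.2 x₁ h₁.1 hne)

lemma exists_sorted (π : StrictTotalOrders X) (A : Finset X) :
    ∃ l : List X, l.Nodup ∧ l.toFinset = A ∧ l.Chain' π.1 := by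
  classical
  suffices H : ∀ (n : ℕ) (A : Finset X), A.card = n →
      ∃ l : List X, l.Nodup ∧ l.toFinset = A ∧ l.Chain' π.1 from H A.card A rfl
  intro n
  induction n with
  | zero =>
    intro A hn
    refine ⟨[], by simp, ?_, List.isChain_nil⟩
    simp [Finset.card_eq_zero.1 hn]
  | succ n ih =>
    intro A hn
    have hA : A.Nonempty := Finset.card_pos.1 (by omega)
    obtain ⟨x, hx, htop⟩ := exists_top π A hA
    obtain ⟨l', hnd, htf, hch⟩ := ih (A.erase x) (by rw [Finset.card_erase_of_mem hx, hn]; omega)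
    refine ⟨x :: l', ?_, ?_, ?_⟩
    · refine List.nodup_cons.2 ⟨?_, hnd⟩
      intro hxl
      have : x ∈ A.erase x := htf ▸ List.mem_toFinset.2 hxl
      simp at this
    · rw [List.toFinset_cons, htf, Finset.insert_erase hx]
    · refine List.isChain_cons.2 ⟨?_, hch⟩
      intro y hy
      have hyl : y ∈ l' := List.mem_of_mem_head? hy
      have : y ∈ A.erase x := htf ▸ List.mem_toFinset.2 hyl
      exact htop y (Finset.mem_of_mem_erase this) (Finset.ne_of_mem_erase this)

/-- A version of `exists_sorted` with a prescribed top element. -/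
lemma exists_sorted_top (π : StrictTotalOrders X) (A : Finset X) (x : X) (hx : x ∈ A)
    (htop : ∀ y ∈ A, y ≠ x → π.1 x y) :
    ∃ l : List X, l.Nodup ∧ l.toFinset = A ∧ l.Chain' π.1 ∧ l.head? = some x := by
  classical
  obtain ⟨l', hnd, htf, hch⟩ := exists_sorted π (A.erase x)
  refine ⟨x :: l', ?_, ?_, ?_, rfl⟩
  · refine List.nodup_cons.2 ⟨?_, hnd⟩
    intro hxl
    have : x ∈ A.erase x := htf ▸ List.mem_toFinset.2 hxl
    simp at this
  · rw [List.toFinset_cons, htf, Finset.insert_erase hx]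
  · refine List.isChain_cons.2 ⟨?_, hch⟩
    intro y hy
    have hyl : y ∈ l' := List.mem_of_mem_head? hy
    have : y ∈ A.erase x := htf ▸ List.mem_toFinset.2 hyl
    exact htop y (Finset.mem_of_mem_erase this) (Finset.ne_of_mem_erase this)

lemma topEvent_eq (A : Finset X) (x : X) (hx : x ∈ A) :
    {π : StrictTotalOrders X | ∀ y ∈ A, y ≠ x → π.1 x y}
      = ⋃ l ∈ (A.toList.permutations.filter fun l => l.head? = some x).toFinset,
          {π : StrictTotalOrders X | l.Chain' π.1} := by
  classical
  ext π
  simp only [Set.mem_iUnion, List.mem_toFinset, List.mem_filter, List.mem_permutations,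
    Set.mem_setOf_eq, exists_prop]
  constructor
  · intro h
    obtain ⟨l, hnd, htf, hch, hhd⟩ := exists_sorted_top π A x hx h
    refine ⟨l, ⟨?_, by simp [hhd]⟩, hch⟩
    exact List.perm_of_nodup_nodup_toFinset_eq hnd A.nodup_toList
      (by rw [htf, Finset.toList_toFinset])
  · rintro ⟨l, ⟨hperm, hhd⟩, hch⟩ y hy hyx
    haveI : IsTrans X π.1 := ⟨fun a b c => π.2.2.1 a b c⟩
    have hpw := List.isChain_iff_pairwise.1 hch
    obtain ⟨z, rest, rfl⟩ : ∃ z rest, l = z :: rest := by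
      cases l with
      | nil => simp at hhd
      | cons z rest => exact ⟨z, rest, rfl⟩
    have hz : z = x := by simpa using of_decide_eq_true hhd
    subst hz
    have hyl : y ∈ z :: rest := hperm.mem_iff.2 (by simp [hy])
    have hyrest : y ∈ rest := by
      rcases List.mem_cons.1 hyl with rfl | h
      · exact absurd rfl hyx
      · exact h
    exact (List.pairwise_cons.1 hpw).1 y hyrest

lemma measurableSet_topEvent (A : Finset X) (x : X) (hx : x ∈ A) :
    MeasurableSet {π : StrictTotalOrders X | ∀ y ∈ A, y ≠ x → π.1 x y} := by
  classical
  rw [topEvent_eq A x hx]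
  refine Finset.measurableSet_biUnion _ ?_
  intro l hl
  simp only [List.mem_toFinset, List.mem_filter, List.mem_permutations] at hl
  have hnd : l.Nodup := hl.1.nodup_iff.2 A.nodup_toList
  exact MeasurableSpace.measurableSet_generateFrom ⟨l, hnd, rfl⟩

instance nonemptyOrders (X : Type*) : Nonempty (StrictTotalOrders X) := by
  refine ⟨⟨WellOrderingRel, fun a => irrefl a, fun a b c h h' => _root_.trans h h', fun a b hab => ?_⟩⟩
  rcases trichotomous_of WellOrderingRel a b with h | h | h
  · exact Or.inl h
  · exact absurd h hab
  · exact Or.inr h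


variable {X : Type*}

/-- Embedding of strict total orders into the boolean function space. -/
noncomputable def emb (π : StrictTotalOrders X) : X → X → Bool := fun a b => decide (π.1 a b)

lemma emb_spec (π : StrictTotalOrders X) (a b : X) : emb π a b = true ↔ π.1 a b := by
  simp [emb]

lemma isClosed_range_emb : IsClosed (Set.range (emb (X := X))) := by
  have : Set.range (emb (X := X)) =
      (⋂ a : X, {g : X → X → Bool | g a a = false}) ∩
      ((⋂ a : X, ⋂ b : X, ⋂ c : X,
        ({g : X → X → Bool | g a b = false} ∪ {g | g b c = false} ∪ {g | g a c = true})) ∩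
      (⋂ a : X, ⋂ b : X, {g : X → X → Bool | a = b} ∪ {g | g a b = true} ∪ {g | g b a = true})) := by
    ext g
    simp only [Set.mem_inter_iff, Set.mem_iInter, Set.mem_range, Set.mem_setOf_eq,
      Set.mem_union]
    constructor
    · rintro ⟨π, rfl⟩
      refine ⟨fun a => ?_, fun a b c => ?_, fun a b => ?_⟩
      · by_contra h
        exact π.2.1 a ((emb_spec π a a).1 (Bool.not_eq_false _ ▸ h))
      · by_cases h1 : π.1 a b
        · by_cases h2 : π.1 b c
          · exact Or.inr ((emb_spec π a c).2 (π.2.2.1 a b c h1 h2))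
          · exact Or.inl (Or.inr (by simp [emb, h2]))
        · exact Or.inl (Or.inl (by simp [emb, h1]))
      · by_cases hab : a = b
        · exact Or.inl (Or.inl hab)
        · rcases π.2.2.2 a b hab with h | h
          · exact Or.inl (Or.inr ((emb_spec π a b).2 h))
          · exact Or.inr ((emb_spec π b a).2 h)
    · rintro ⟨h1, h2, h3⟩
      refine ⟨⟨fun a b => g a b = true, fun a ha => ?_, fun a b c hab hbc => ?_, fun a b hab => ?_⟩, ?_⟩
      · have ha' : g a a = true := ha
        rw [h1 a] at ha'; exact Bool.false_ne_true ha'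
      · have hab' : g a b = true := hab
        have hbc' : g b c = true := hbc
        rcases h2 a b c with (h | h) | h
        · rw [h] at hab'; exact absurd hab' (by simp)
        · rw [h] at hbc'; exact absurd hbc' (by simp)
        · exact h
      · rcases h3 a b with (h | h) | h
        · exact absurd h hab
        · exact Or.inl h
        · exact Or.inr h
      · funext a b
        simp [emb]
  rw [this]
  have hopen : ∀ (a b : X) (v : Bool), IsClosed {g : X → X → Bool | g a b = v} := by
    intro a b v
    have : Continuous (fun g : X → X → Bool => g a b) :=
      (continuous_apply b).comp (continuous_apply a)
    exact IsClosed.preimage this (isClosed_discrete {v})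
  refine IsClosed.inter (isClosed_iInter fun a => hopen a a false) (IsClosed.inter ?_ ?_)
  · refine isClosed_iInter fun a => isClosed_iInter fun b => isClosed_iInter fun c => ?_
    exact IsClosed.union (IsClosed.union (hopen a b false) (hopen b c false)) (hopen a c true)
  · refine isClosed_iInter fun a => isClosed_iInter fun b => ?_
    refine IsClosed.union (IsClosed.union ?_ (hopen a b true)) (hopen b a true)
    by_cases h : a = b
    · simp [h]
    · convert isClosed_empty
      ext g; simp [h]

/-- The algebra of cylinder sets: sets depending only on finitely many coordinates. -/
def Cyl (X : Type*) : Set (Set (StrictTotalOrders X)) :=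
  {s | ∃ F : Finset X, ∀ π π' : StrictTotalOrders X,
    (∀ a ∈ F, ∀ b ∈ F, (π.1 a b ↔ π'.1 a b)) → (π ∈ s ↔ π' ∈ s)}

lemma empty_mem_Cyl : (∅ : Set (StrictTotalOrders X)) ∈ Cyl X := ⟨∅, fun _ _ _ => Iff.rfl⟩

lemma univ_mem_Cyl : (Set.univ : Set (StrictTotalOrders X)) ∈ Cyl X := ⟨∅, fun _ _ _ => Iff.rfl⟩

lemma compl_mem_Cyl {s : Set (StrictTotalOrders X)} (hs : s ∈ Cyl X) : sᶜ ∈ Cyl X := by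
  obtain ⟨F, hF⟩ := hs
  exact ⟨F, fun π π' h => not_congr (hF π π' h)⟩

lemma inter_mem_Cyl {s u : Set (StrictTotalOrders X)} (hs : s ∈ Cyl X) (hu : u ∈ Cyl X) :
    s ∩ u ∈ Cyl X := by
  obtain ⟨F, hF⟩ := hs
  obtain ⟨G, hG⟩ := hu
  refine ⟨F ∪ G, fun π π' h => ?_⟩
  have h1 := hF π π' fun a ha b hb => h a (Finset.mem_union_left _ ha) b (Finset.mem_union_left _ hb)
  have h2 := hG π π' fun a ha b hb =>
    h a (Finset.mem_union_right _ ha) b (Finset.mem_union_right _ hb)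
  exact and_congr h1 h2

lemma diff_mem_Cyl {s u : Set (StrictTotalOrders X)} (hs : s ∈ Cyl X) (hu : u ∈ Cyl X) :
    s \ u ∈ Cyl X := inter_mem_Cyl hs (compl_mem_Cyl hu)

lemma chain'_dep {r r' : X → X → Prop} (l : List X) (h : ∀ a ∈ l, ∀ b ∈ l, r a b ↔ r' a b) :
    l.Chain' r ↔ l.Chain' r' := by
  induction l with
  | nil => exact iff_of_true List.isChain_nil List.isChain_nil
  | cons a t ih =>
    cases t with
    | nil => exact iff_of_true (List.isChain_singleton _) (List.isChain_singleton _)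
    | cons b t' =>
      show List.IsChain r _ ↔ List.IsChain r' _
      rw [List.isChain_cons_cons, List.isChain_cons_cons]
      refine and_congr (h a (by simp) b (by simp)) (ih ?_)
      intro x hx y hy
      exact h x (List.mem_cons_of_mem _ hx) y (List.mem_cons_of_mem _ hy)

lemma generator_mem_Cyl (l : List X) :
    {π : StrictTotalOrders X | l.Chain' π.1} ∈ Cyl X := by
  refine ⟨l.toFinset, fun π π' h => ?_⟩
  exact chain'_dep l fun a ha b hb =>
    h a (List.mem_toFinset.2 ha) b (List.mem_toFinset.2 hb)

lemma topEvent_mem_Cyl (A : Finset X) (x : X) (hx : x ∈ A) :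
    {π : StrictTotalOrders X | ∀ y ∈ A, y ≠ x → π.1 x y} ∈ Cyl X := by
  refine ⟨A, fun π π' h => ?_⟩
  simp only [Set.mem_setOf_eq]
  exact forall₂_congr fun y hy => imp_congr Iff.rfl (h x hx y hy)

/-- The open set in the boolean function space corresponding to a cylinder set. -/
def cylO (s : Set (StrictTotalOrders X)) (F : Finset X) : Set (X → X → Bool) :=
  {g | ∃ π ∈ s, ∀ a ∈ F, ∀ b ∈ F, g a b = emb π a b}

lemma isOpen_cylO (s : Set (StrictTotalOrders X)) (F : Finset X) : IsOpen (cylO s F) := by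
  have : cylO s F = ⋃ π ∈ s, ⋂ a ∈ F, ⋂ b ∈ F, {g : X → X → Bool | g a b = emb π a b} := by
    ext g
    simp only [cylO, Set.mem_setOf_eq, Set.mem_iUnion, Set.mem_iInter, exists_prop]
  rw [this]
  refine isOpen_biUnion fun π _ => ?_
  refine (Set.Finite.isOpen_biInter F.finite_toSet fun a _ => ?_)
  refine (Set.Finite.isOpen_biInter F.finite_toSet fun b _ => ?_)
  have hc : Continuous (fun g : X → X → Bool => g a b) :=
    (continuous_apply b).comp (continuous_apply a)
  exact IsOpen.preimage hc (isOpen_discrete {emb π a b})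

lemma preimage_cylO {s : Set (StrictTotalOrders X)} {F : Finset X}
    (hF : ∀ π π' : StrictTotalOrders X,
      (∀ a ∈ F, ∀ b ∈ F, (π.1 a b ↔ π'.1 a b)) → (π ∈ s ↔ π' ∈ s)) :
    emb ⁻¹' cylO s F = s := by
  ext π'
  simp only [Set.mem_preimage, cylO, Set.mem_setOf_eq]
  constructor
  · rintro ⟨π, hπ, hagree⟩
    refine (hF π π' ?_).1 hπ
    intro a ha b hb
    rw [← emb_spec π a b, ← emb_spec π' a b, hagree a ha b hb]
  · intro h
    exact ⟨π', h, fun a _ b _ => rfl⟩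

/-- The key compactness property of cylinder sets. -/
lemma cyl_subcover {s : Set (StrictTotalOrders X)} (hs : s ∈ Cyl X)
    (c : ℕ → Set (StrictTotalOrders X)) (hc : ∀ i, c i ∈ Cyl X) (hcov : s ⊆ ⋃ i, c i) :
    ∃ J : Finset ℕ, s ⊆ ⋃ i ∈ J, c i := by
  obtain ⟨F, hF⟩ := compl_mem_Cyl hs
  choose G hG using hc
  set K : Set (X → X → Bool) := Set.range (emb (X := X)) ∩ (cylO sᶜ F)ᶜ with hK
  have hKcl : IsCompact K :=
    (IsClosed.inter isClosed_range_emb (isClosed_compl_iff.2 (isOpen_cylO _ _))).isCompact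
  have hKcov : K ⊆ ⋃ i, cylO (c i) (G i) := by
    rintro g ⟨⟨π, rfl⟩, hg2⟩
    have hπs : π ∈ s := by
      by_contra h
      have : emb π ∈ cylO sᶜ F := by
        have h2 : π ∈ emb ⁻¹' cylO sᶜ F := by rw [preimage_cylO hF]; exact h
        exact h2
      exact hg2 this
    obtain ⟨i, hi⟩ := Set.mem_iUnion.1 (hcov hπs)
    exact Set.mem_iUnion.2 ⟨i, π, hi, fun a _ b _ => rfl⟩
  obtain ⟨J, hJ⟩ := hKcl.elim_finite_subcover _ (fun i => isOpen_cylO (c i) (G i)) hKcov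
  refine ⟨J, fun π hπ => ?_⟩
  have hπK : emb π ∈ K := by
    refine ⟨Set.mem_range_self π, fun h => ?_⟩
    have : π ∈ sᶜ := by rw [← preimage_cylO hF]; exact h
    exact this hπ
  obtain ⟨i, hiJ, hi⟩ := Set.mem_iUnion₂.1 (hJ hπK)
  refine Set.mem_iUnion₂.2 ⟨i, hiJ, ?_⟩
  rw [← preimage_cylO (hG i)]
  exact hi


variable {X : Type*}

lemma finite_stage (𝒜 : Set (Finset X)) (P : Finset X → X → ℝ) (hP : IsStochasticDataset 𝒜 P)
    (hA : ARSP 𝒜 P) (F : Finset X) :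
    ∃ (t : Finset (StrictTotalOrders X)) (w : StrictTotalOrders X → ℝ),
      (∀ π ∈ t, 0 ≤ w π) ∧ (∑ π ∈ t, w π = 1) ∧
      ∀ A ∈ 𝒜, A ⊆ F → ∀ x ∈ A,
        (∑ π ∈ t, w π * (if ∀ y ∈ A, y ≠ x → π.1 x y then 1 else 0)) = P A x := by
  classical
  haveI := nonemptyOrders X
  set M : Finset (Finset X) := F.powerset.filter (· ∈ 𝒜) with hM
  set D : Finset (Finset X × X) := M.biUnion (fun A => A.image fun x => (A, x)) with hD
  have mem_D : ∀ {A : Finset X} {x : X}, (A, x) ∈ D ↔ A ∈ M ∧ x ∈ A := by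
    intro A x
    simp only [hD, Finset.mem_biUnion, Finset.mem_image]
    constructor
    · rintro ⟨B, hB, y, hy, h⟩
      obtain ⟨rfl, rfl⟩ : B = A ∧ y = x := by
        constructor <;> [exact congrArg Prod.fst h; exact congrArg Prod.snd h]
      exact ⟨hB, hy⟩
    · rintro ⟨h1, h2⟩; exact ⟨A, h1, x, h2, rfl⟩
  have hM_mem : ∀ {A : Finset X}, A ∈ M → A ∈ 𝒜 ∧ A ⊆ F := by
    intro A h
    simp only [hM, Finset.mem_filter, Finset.mem_powerset] at h
    exact ⟨h.2, h.1⟩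
  -- the finite-dimensional space
  set ι := {d // d ∈ D}
  set χ : StrictTotalOrders X → ι → ℝ :=
    fun π d => if ∀ y ∈ d.1.1, y ≠ d.1.2 → π.1 d.1.2 y then 1 else 0 with hχ
  set p : ι → ℝ := fun d => P d.1.1 d.1.2 with hp
  -- regrouping sums over ι
  have regroup : ∀ g : Finset X × X → ℝ,
      ∑ d : ι, g d.1 = ∑ A ∈ M, ∑ x ∈ A, g (A, x) := by
    intro g
    rw [Finset.sum_coe_sort D (fun d => g d), hD, Finset.sum_biUnion]
    · refine Finset.sum_congr rfl fun A hAM => ?_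
      rw [Finset.sum_image]
      intro x hx y hy h
      exact congrArg Prod.snd h
    · intro A hAM B hBM hAB
      simp only [Finset.disjoint_left, Finset.mem_image]
      rintro ⟨C, c⟩ ⟨x, hx, h1⟩ ⟨y, hy, h2⟩
      exact hAB ((congrArg Prod.fst h1).trans (congrArg Prod.fst h2).symm)
  -- each menu has exactly one top element
  have top_sum : ∀ (π : StrictTotalOrders X), ∀ A ∈ M,
      ∑ x ∈ A, (if ∀ y ∈ A, y ≠ x → π.1 x y then (1 : ℝ) else 0) = 1 := by
    intro π A hAM
    have hne : A.Nonempty := (hP A (hM_mem hAM).1).1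
    obtain ⟨x₀, hx₀, htop⟩ := exists_top π A hne
    have : ∀ x ∈ A, (if ∀ y ∈ A, y ≠ x → π.1 x y then (1 : ℝ) else 0)
        = if x = x₀ then 1 else 0 := by
      intro x hx
      congr 1
      simp only [eq_iff_iff]
      constructor
      · intro h; exact top_unique π A ⟨hx, h⟩ ⟨hx₀, htop⟩
      · rintro rfl; exact htop
    rw [Finset.sum_congr rfl this, Finset.sum_ite_eq' A x₀ (fun _ => (1:ℝ))]
    simp [hx₀]
  have hχsum : ∀ π, ∑ d : ι, χ π d = (M.card : ℝ) := by
    intro π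
    rw [hχ]
    rw [regroup (fun q => if ∀ y ∈ q.1, y ≠ q.2 → π.1 q.2 y then (1:ℝ) else 0)]
    rw [Finset.sum_congr rfl (fun A hAM => top_sum π A hAM)]
    simp
  have hpsum : ∑ d : ι, p d = (M.card : ℝ) := by
    rw [hp, regroup (fun q => P q.1 q.2)]
    rw [Finset.sum_congr rfl (fun A hAM => (hP A (hM_mem hAM).1).2.2)]
    simp
  have hχ01 : ∀ π d, χ π d = 0 ∨ χ π d = 1 := by
    intro π d
    by_cases h : ∀ y ∈ d.1.1, y ≠ d.1.2 → π.1 d.1.2 y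
    · right; simp only [hχ]; exact if_pos h
    · left; simp only [hχ]; exact if_neg h
  have hχ0 : ∀ π d, 0 ≤ χ π d := by
    intro π d; rcases hχ01 π d with h | h <;> simp [h]
  have hχ1 : ∀ π d, χ π d ≤ 1 := by
    intro π d; rcases hχ01 π d with h | h <;> simp [h]
  have hp0 : ∀ d, 0 ≤ p d := fun d => (hP _ (hM_mem (mem_D.1 d.2).1).1).2.1 _ (mem_D.1 d.2).2
  have hVfin : (Set.range χ).Finite := by
    refine Set.Finite.subset (Set.Finite.pi (t := fun _ : ι => ({0, 1} : Set ℝ))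
      (fun _ => (Set.finite_singleton 1).insert 0)) ?_
    rintro _ ⟨π, rfl⟩
    intro d _
    rcases hχ01 π d with h | h <;> simp [h]
  -- the key convexity claim
  have hull : p ∈ convexHull ℝ (Set.range χ) := by
    by_contra hnot
    have hclosed : IsClosed (convexHull ℝ (Set.range χ)) :=
      (hVfin.isCompact_convexHull ℝ).isClosed
    obtain ⟨f, u, hfu, hup⟩ := geometric_hahn_banach_closed_point
      (convex_convexHull ℝ _) hclosed hnot
    set lam : ι → ℝ := fun d => f (Pi.single d 1) with hlam
    have hfeq : ∀ y : ι → ℝ, f y = ∑ d, y d * lam d := by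
      intro y
      conv_lhs => rw [← Finset.univ_sum_single y]
      rw [map_sum]
      refine Finset.sum_congr rfl fun d _ => ?_
      have h1 : Pi.single d (y d) = y d • (Pi.single d 1 : ι → ℝ) := by
        rw [← Pi.single_smul, smul_eq_mul, mul_one]
      rw [h1, ContinuousLinearMap.map_smul, smul_eq_mul, hlam]
    set c : ℝ := 1 + ∑ d, |lam d| with hc
    set lam' : ι → ℝ := fun d => lam d + c with hlam'
    have hlampos : ∀ d, 0 < lam' d := by
      intro d
      have h1 : |lam d| ≤ ∑ e, |lam e| :=
        Finset.single_le_sum (f := fun e => |lam e|) (fun e _ => abs_nonneg _) (Finset.mem_univ d)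
      have h2 : -(∑ e, |lam e|) ≤ lam d := le_trans (neg_le_neg h1) (neg_abs_le _)
      simp only [hlam', hc]
      linarith
    set ε : ℝ := f p - u with hε
    have hεpos : 0 < ε := by simp only [hε]; linarith
    have hdot : ∀ v : ι → ℝ, ∑ d, lam' d * v d = f v + c * ∑ d, v d := by
      intro v
      rw [hfeq v, Finset.mul_sum, ← Finset.sum_add_distrib]
      refine Finset.sum_congr rfl fun d _ => ?_
      simp only [hlam']
      ring
    have hsep : ∀ π, ∑ d, lam' d * χ π d < (∑ d, lam' d * p d) - ε := by
      intro π
      rw [hdot (χ π), hdot p, hχsum π, hpsum]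
      have h1 : f (χ π) < u := hfu _ (subset_convexHull ℝ _ (Set.mem_range_self π))
      simp only [hε]
      linarith
    -- choose a large integer multiplier
    obtain ⟨N₀, hN₀⟩ := exists_nat_ge ((Fintype.card ι : ℝ) / ε)
    set N : ℕ := N₀ + 1 with hN
    have hNε : (Fintype.card ι : ℝ) < N * ε := by
      have h1 : (Fintype.card ι : ℝ) ≤ N₀ * ε := by
        rw [div_le_iff₀ hεpos] at hN₀; exact hN₀
      have h2 : (N : ℝ) = N₀ + 1 := by exact_mod_cast rfl
      nlinarith
    have hNpos : (0 : ℝ) < N := by positivity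
    set m : ι → ℕ := fun d => ⌈(N : ℝ) * lam' d⌉₊ with hm
    have hmle : ∀ d, (m d : ℝ) ≤ N * lam' d + 1 := by
      intro d
      exact le_of_lt (Nat.ceil_lt_add_one (mul_nonneg hNpos.le (hlampos d).le))
    have hmge : ∀ d, (N : ℝ) * lam' d ≤ m d := fun d => Nat.le_ceil _
    have key1 : ∀ π, (∑ d, (m d : ℝ) * χ π d) < ∑ d, (m d : ℝ) * p d := by
      intro π
      have h1 : ∑ d, (m d : ℝ) * χ π d ≤ ∑ d, ((N : ℝ) * lam' d + 1) * χ π d :=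
        Finset.sum_le_sum fun d _ => mul_le_mul_of_nonneg_right (hmle d) (hχ0 π d)
      have h2 : ∑ d, ((N : ℝ) * lam' d + 1) * χ π d
          = (N : ℝ) * (∑ d, lam' d * χ π d) + ∑ d, χ π d := by
        rw [Finset.mul_sum, ← Finset.sum_add_distrib]
        refine Finset.sum_congr rfl fun d _ => ?_
        ring
      have h3 : ∑ d, χ π d ≤ (Fintype.card ι : ℝ) := by
        calc ∑ d, χ π d ≤ ∑ d : ι, (1 : ℝ) := Finset.sum_le_sum fun d _ => hχ1 π d
          _ = (Fintype.card ι : ℝ) := by simp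
      have h4 : (N : ℝ) * (∑ d, lam' d * χ π d) < N * ((∑ d, lam' d * p d) - ε) :=
        (mul_lt_mul_iff_right₀ hNpos).2 (hsep π)
      have h5 : (N : ℝ) * (∑ d, lam' d * p d) ≤ ∑ d, (m d : ℝ) * p d := by
        rw [Finset.mul_sum]
        refine Finset.sum_le_sum fun d _ => ?_
        rw [← mul_assoc]
        exact mul_le_mul_of_nonneg_right (hmge d) (hp0 d)
      nlinarith
    -- build the ARSP instance
    set σ : Type _ := (d : ι) × Fin (m d) with hσ
    set n : ℕ := Fintype.card σ with hn
    set e : Fin n ≃ σ := (Fintype.equivFin σ).symm with he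
    set Af : Fin n → Finset X := fun i => ((e i).1.1 : Finset X × X).1 with hAf
    set xf : Fin n → X := fun i => ((e i).1.1 : Finset X × X).2 with hxf
    have hAx : ∀ i, Af i ∈ 𝒜 ∧ xf i ∈ Af i := by
      intro i
      obtain ⟨h1, h2⟩ := mem_D.1 (e i).1.2
      exact ⟨(hM_mem h1).1, h2⟩
    obtain ⟨π, hπ⟩ := hA n Af xf hAx
    have hPsum : ∑ i, P (Af i) (xf i) = ∑ d, (m d : ℝ) * p d := by
      calc ∑ i, P (Af i) (xf i) = ∑ s : σ, P (s.1.1 : Finset X × X).1 (s.1.1 : Finset X × X).2 := by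
            exact Equiv.sum_comp e (fun s : σ => P (s.1.1 : Finset X × X).1 (s.1.1 : Finset X × X).2)
        _ = ∑ d, (m d : ℝ) * p d := by
            rw [← Finset.univ_sigma_univ, Finset.sum_sigma]
            refine Finset.sum_congr rfl fun d _ => ?_
            dsimp only
            rw [Finset.sum_const, Finset.card_univ, Fintype.card_fin, nsmul_eq_mul]
    have hcard : ((Finset.univ.filter fun i : Fin n =>
        ∀ y ∈ Af i, y ≠ xf i → π.1 (xf i) y).card : ℝ) = ∑ d, (m d : ℝ) * χ π d := by
      rw [← Finset.sum_boole]
      calc (∑ i, if ∀ y ∈ Af i, y ≠ xf i → π.1 (xf i) y then (1:ℝ) else 0)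
          = ∑ i, χ π (e i).1 := by
            refine Finset.sum_congr rfl fun i _ => ?_
            simp only [hχ, hAf, hxf]
        _ = ∑ s : σ, χ π s.1 := Equiv.sum_comp e (fun s : σ => χ π s.1)
        _ = ∑ d, (m d : ℝ) * χ π d := by
            rw [← Finset.univ_sigma_univ, Finset.sum_sigma]
            refine Finset.sum_congr rfl fun d _ => ?_
            dsimp only
            rw [Finset.sum_const, Finset.card_univ, Fintype.card_fin, nsmul_eq_mul]
    rw [hPsum, hcard] at hπ
    exact absurd hπ (not_le.2 (key1 π))
  -- extract the representation as a finite convex combination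
  set V : Finset (ι → ℝ) := hVfin.toFinset with hV
  have hpV : p ∈ convexHull ℝ (V : Set (ι → ℝ)) := by
    rwa [hV, Set.Finite.coe_toFinset]
  rw [Finset.convexHull_eq] at hpV
  obtain ⟨w, hw0, hw1, hwp⟩ := hpV
  rw [Finset.centerMass_eq_of_sum_1 _ id hw1] at hwp
  set Φ : (ι → ℝ) → StrictTotalOrders X := fun y =>
    if h : y ∈ Set.range χ then h.choose else Classical.arbitrary _ with hΦ
  have hΦy : ∀ y ∈ V, χ (Φ y) = y := by
    intro y hy
    have hyr : y ∈ Set.range χ := by rwa [hV, Set.Finite.mem_toFinset] at hy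
    simp only [hΦ, dif_pos hyr]
    exact hyr.choose_spec
  have hΦinj : ∀ y₁ ∈ V, ∀ y₂ ∈ V, Φ y₁ = Φ y₂ → y₁ = y₂ := by
    intro y₁ h₁ y₂ h₂ h
    rw [← hΦy y₁ h₁, ← hΦy y₂ h₂, h]
  refine ⟨V.image Φ, fun π => w (χ π), ?_, ?_, ?_⟩
  · intro π hπ
    obtain ⟨y, hy, rfl⟩ := Finset.mem_image.1 hπ
    show 0 ≤ w (χ (Φ y))
    rw [hΦy y hy]
    exact hw0 y hy
  · rw [Finset.sum_image hΦinj]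
    rw [← hw1]
    exact Finset.sum_congr rfl fun y hy => by rw [hΦy y hy]
  · intro A hA𝒜 hAF x hx
    have hAM : A ∈ M := by
      simp only [hM, Finset.mem_filter, Finset.mem_powerset]
      exact ⟨hAF, hA𝒜⟩
    set d : ι := ⟨(A, x), mem_D.2 ⟨hAM, hx⟩⟩ with hd
    have hgoal : ∀ π : StrictTotalOrders X,
        (if ∀ y ∈ A, y ≠ x → π.1 x y then (1:ℝ) else 0) = χ π d := by
      intro π; simp only [hχ]; rfl
    calc (∑ π ∈ V.image Φ, w (χ π) * (if ∀ y ∈ A, y ≠ x → π.1 x y then (1:ℝ) else 0))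
        = ∑ π ∈ V.image Φ, w (χ π) * χ π d := by
          exact Finset.sum_congr rfl fun π _ => by rw [hgoal π]
      _ = ∑ y ∈ V, w (χ (Φ y)) * χ (Φ y) d := Finset.sum_image hΦinj
      _ = ∑ y ∈ V, w y * y d := by
          refine Finset.sum_congr rfl fun y hy => by rw [hΦy y hy]
      _ = (∑ y ∈ V, w y • id y) d := by
          rw [Finset.sum_apply]
          exact Finset.sum_congr rfl fun y _ => rfl
      _ = p d := by rw [hwp]
      _ = P A x := rfl


variable {X : Type*}

lemma forward (𝒜 : Set (Finset X)) (P : Finset X → X → ℝ) (hP : IsStochasticDataset 𝒜 P)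
    (h : StochRationalizable 𝒜 P) : ARSP 𝒜 P := by
  classical
  haveI := nonemptyOrders X
  obtain ⟨ν, hν, hc⟩ := h
  intro n A x hAx
  set E : Fin n → Set (StrictTotalOrders X) :=
    fun i => {π | ∀ y ∈ A i, y ≠ x i → π.1 (x i) y} with hE
  have hmeas : ∀ i, MeasurableSet (E i) := fun i => measurableSet_topEvent _ _ (hAx i).2
  set f : StrictTotalOrders X → ℕ :=
    fun π => (Finset.univ.filter fun i : Fin n => π ∈ E i).card with hf
  have hbdd : ∀ π, f π ≤ n := fun π => le_trans (Finset.card_filter_le _ _) (by simp)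
  obtain ⟨π₀, hπ₀⟩ : ∃ π₀, ∀ π, f π ≤ f π₀ := by
    have hne : (Set.range f).Nonempty := Set.range_nonempty f
    have hbd : BddAbove (Set.range f) := ⟨n, by rintro _ ⟨π, rfl⟩; exact hbdd π⟩
    obtain ⟨π₀, hπ₀⟩ := Nat.sSup_mem hne hbd
    exact ⟨π₀, fun π => hπ₀ ▸ le_csSup hbd (Set.mem_range_self π)⟩
  have key : ∑ i, ENNReal.ofReal (P (A i) (x i)) ≤ (f π₀ : ℝ≥0∞) := by
    have h1 : ∀ i, ENNReal.ofReal (P (A i) (x i)) = ν (E i) :=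
      fun i => (hc (A i) (hAx i).1 (x i) (hAx i).2).symm
    calc ∑ i, ENNReal.ofReal (P (A i) (x i)) = ∑ i, ν (E i) := by simp_rw [h1]
      _ = ∑ i : Fin n, ∫⁻ π, (E i).indicator 1 π ∂ν := by
          refine Finset.sum_congr rfl fun i _ => ?_
          rw [lintegral_indicator_one (hmeas i)]
      _ = ∫⁻ π, ∑ i : Fin n, (E i).indicator 1 π ∂ν := by
          rw [lintegral_finset_sum]
          exact fun i _ => (measurable_one.indicator (hmeas i))
      _ ≤ ∫⁻ _, (f π₀ : ℝ≥0∞) ∂ν := by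
          refine lintegral_mono fun π => ?_
          have h2 : ∑ i : Fin n, (E i).indicator (1 : StrictTotalOrders X → ℝ≥0∞) π
              = (f π : ℝ≥0∞) := by
            rw [hf, ← Finset.sum_boole]
            refine Finset.sum_congr rfl fun i _ => ?_
            by_cases hi : π ∈ E i <;> simp [Set.indicator_apply, hi]
          rw [h2]
          exact (Nat.cast_le (α := ℝ≥0∞)).2 (hπ₀ π)
      _ = (f π₀ : ℝ≥0∞) := by simp [lintegral_const, hν.measure_univ]
  refine ⟨π₀, ?_⟩
  have hsum : ENNReal.ofReal (∑ i, P (A i) (x i)) ≤ ENNReal.ofReal ((f π₀ : ℝ)) := by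
    rw [ENNReal.ofReal_sum_of_nonneg fun i _ => (hP _ (hAx i).1).2.1 _ (hAx i).2]
    simpa [ENNReal.ofReal_natCast] using key
  have := (ENNReal.ofReal_le_ofReal_iff (by positivity)).1 hsum
  refine le_trans this ?_
  have h3 : f π₀ = (Finset.univ.filter fun i : Fin n =>
      ∀ y ∈ A i, y ≠ x i → π₀.1 (x i) y).card := by
    rw [hf]
    exact congrArg Finset.card (Finset.filter_congr fun i _ => Iff.rfl)
  exact_mod_cast le_of_eq (congrArg (Nat.cast : ℕ → ℝ) h3)


variable {X : Type*}


lemma backward (𝒜 : Set (Finset X)) (P : Finset X → X → ℝ) (hP : IsStochasticDataset 𝒜 P)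
    (hARSP : ARSP 𝒜 P) : StochRationalizable 𝒜 P := by
  classical
  -- finite-stage approximations
  choose t w hw0 hw1 hwc using fun F => finite_stage 𝒜 P hP hARSP F
  set νhat : Finset X → Set (StrictTotalOrders X) → ℝ :=
    fun F s => ∑ π ∈ t F, if π ∈ s then w F π else 0 with hνhat
  have hν0 : ∀ F s, 0 ≤ νhat F s := by
    intro F s
    refine Finset.sum_nonneg fun π hπ => ?_
    by_cases h : π ∈ s
    · rw [if_pos h]; exact hw0 F π hπ
    · rw [if_neg h]
  have hν1 : ∀ F s, νhat F s ≤ 1 := by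
    intro F s
    rw [← hw1 F]
    refine Finset.sum_le_sum fun π hπ => ?_
    by_cases h : π ∈ s
    · rw [if_pos h]
    · rw [if_neg h]; exact hw0 F π hπ
  have hνuniv : ∀ F, νhat F Set.univ = 1 := by
    intro F
    rw [hνhat, ← hw1 F]
    exact Finset.sum_congr rfl fun π _ => if_pos (Set.mem_univ π)
  have hνadd : ∀ F (u s : Set (StrictTotalOrders X)),
      νhat F (u ∩ s) + νhat F (u \ s) = νhat F u := by
    intro F u s
    rw [hνhat, ← Finset.sum_add_distrib]
    refine Finset.sum_congr rfl fun π _ => ?_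
    by_cases hu : π ∈ u
    · by_cases hs : π ∈ s
      · rw [if_pos ⟨hu, hs⟩, if_neg (fun h => h.2 hs), if_pos hu, add_zero]
      · rw [if_neg (fun h => hs h.2), if_pos ⟨hu, hs⟩, if_pos hu, zero_add]
    · rw [if_neg (fun h => hu h.1), if_neg (fun h => hu h.1), if_neg hu, add_zero]
  have hνsub : ∀ F (s : Set (StrictTotalOrders X)) (J : Finset ℕ)
      (c : ℕ → Set (StrictTotalOrders X)), s ⊆ ⋃ i ∈ J, c i →
      νhat F s ≤ ∑ i ∈ J, νhat F (c i) := by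
    intro F s J c hcov
    rw [hνhat, Finset.sum_comm]
    refine Finset.sum_le_sum fun π hπ => ?_
    by_cases h : π ∈ s
    · rw [if_pos h]
      obtain ⟨i, hiJ, hi⟩ := Set.mem_iUnion₂.1 (hcov h)
      calc w F π = if π ∈ c i then w F π else 0 := (if_pos hi).symm
        _ ≤ ∑ i ∈ J, if π ∈ c i then w F π else 0 := by
            refine Finset.single_le_sum (f := fun i => if π ∈ c i then w F π else 0)
              (fun j _ => ?_) hiJ
            by_cases hj : π ∈ c j
            · rw [if_pos hj]; exact hw0 F π hπ
            · rw [if_neg hj]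
    · rw [if_neg h]
      refine Finset.sum_nonneg fun j _ => ?_
      by_cases hj : π ∈ c j
      · rw [if_pos hj]; exact hw0 F π hπ
      · rw [if_neg hj]
  have hνE : ∀ (A : Finset X), A ∈ 𝒜 → ∀ x ∈ A, ∀ (F : Finset X), A ⊆ F →
      νhat F {π : StrictTotalOrders X | ∀ y ∈ A, y ≠ x → π.1 x y} = P A x := by
    intro A hA x hx F hAF
    rw [← hwc F A hA hAF x hx, hνhat]
    refine Finset.sum_congr rfl fun π _ => ?_
    by_cases h : ∀ y ∈ A, y ≠ x → π.1 x y
    · have hmem : π ∈ {π : StrictTotalOrders X | ∀ y ∈ A, y ≠ x → π.1 x y} := h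
      rw [if_pos hmem, if_pos h, mul_one]
    · have hmem : π ∉ {π : StrictTotalOrders X | ∀ y ∈ A, y ≠ x → π.1 x y} := h
      rw [if_neg hmem, if_neg h, mul_zero]
  -- the ultrafilter limit
  haveI : Nonempty (Finset X) := ⟨∅⟩
  set U : Ultrafilter (Finset X) := Ultrafilter.of Filter.atTop with hU
  have hUle : (U : Filter (Finset X)) ≤ Filter.atTop := Ultrafilter.of_le _
  have hlim : ∀ s : Set (StrictTotalOrders X), ∃ L ∈ Set.Icc (0:ℝ) 1,
      Filter.Tendsto (fun F => νhat F s) U (nhds L) := by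
    intro s
    have h1 : Set.Icc (0:ℝ) 1 ∈ U.map (fun F => νhat F s) := by
      refine Ultrafilter.mem_map.2 ?_
      exact Filter.univ_mem' fun F => ⟨hν0 F s, hν1 F s⟩
    obtain ⟨L, hL, hle⟩ := isCompact_Icc.ultrafilter_le_nhds (U.map (fun F => νhat F s))
      (Filter.le_principal_iff.2 h1)
    refine ⟨L, hL, ?_⟩
    have h2 := hle
    rw [Ultrafilter.coe_map] at h2
    exact h2
  choose μ hμmem hμtend using hlim
  have hμ0 : ∀ s, 0 ≤ μ s := fun s => (hμmem s).1
  have hμuniv : μ Set.univ = 1 :=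
    tendsto_nhds_unique (hμtend Set.univ)
      (by simpa only [hνuniv] using (tendsto_const_nhds : Filter.Tendsto (fun _ : Finset X => (1:ℝ)) U (nhds 1)))
  have hμadd : ∀ u s, μ (u ∩ s) + μ (u \ s) = μ u := by
    intro u s
    refine tendsto_nhds_unique ?_ (hμtend u)
    exact ((hμtend (u ∩ s)).add (hμtend (u \ s))).congr fun F => hνadd F u s
  have hμsub : ∀ (s : Set (StrictTotalOrders X)) (J : Finset ℕ)
      (c : ℕ → Set (StrictTotalOrders X)), s ⊆ ⋃ i ∈ J, c i →
      μ s ≤ ∑ i ∈ J, μ (c i) := by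
    intro s J c hcov
    have h1 : Filter.Tendsto (fun F => ∑ i ∈ J, νhat F (c i)) U
        (nhds (∑ i ∈ J, μ (c i))) := tendsto_finset_sum J (fun i _ => hμtend (c i))
    exact le_of_tendsto_of_tendsto (hμtend s) h1
      (Filter.Eventually.of_forall fun F => hνsub F s J c hcov)
  have hμE : ∀ A ∈ 𝒜, ∀ x ∈ A,
      μ {π : StrictTotalOrders X | ∀ y ∈ A, y ≠ x → π.1 x y} = P A x := by
    intro A hA x hx
    refine tendsto_nhds_unique (hμtend _) ?_
    have hev : ∀ᶠ F in (U : Filter (Finset X)),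
        νhat F {π : StrictTotalOrders X | ∀ y ∈ A, y ≠ x → π.1 x y} = P A x := by
      have hmem : {F : Finset X | A ≤ F} ∈ (U : Filter (Finset X)) :=
        hUle (Filter.mem_atTop A)
      filter_upwards [hmem] with F hF
      exact hνE A hA x hx F hF
    exact Filter.Tendsto.congr' (Filter.EventuallyEq.symm hev) tendsto_const_nhds
  have hnuempty : ∀ F, νhat F (∅ : Set (StrictTotalOrders X)) = 0 := by
    intro F
    rw [hνhat]
    simp
  have hmuempty : μ (∅ : Set (StrictTotalOrders X)) = 0 := by
    refine tendsto_nhds_unique (hμtend ∅) ?_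
    exact Filter.Tendsto.congr (fun F => (hnuempty F).symm) tendsto_const_nhds
  -- the outer measure and the measure
  set m : Set (StrictTotalOrders X) → ℝ≥0∞ :=
    fun s => if s ∈ Cyl X then ENNReal.ofReal (μ s) else ∞ with hm
  have hmempty : m ∅ = 0 := by
    rw [hm]
    simp only [if_pos (empty_mem_Cyl (X := X)), hmuempty, ENNReal.ofReal_zero]
  set κ := OuterMeasure.ofFunction m hmempty with hκ
  have hκcyl : ∀ s ∈ Cyl X, κ s = m s := by
    intro s hs
    refine le_antisymm (OuterMeasure.ofFunction_le s) ?_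
    rw [hκ, OuterMeasure.ofFunction_apply]
    refine le_iInf₂ fun c hcov => ?_
    by_cases hall : ∀ i, c i ∈ Cyl X
    · obtain ⟨J, hJ⟩ := cyl_subcover hs c hall hcov
      calc m s = ENNReal.ofReal (μ s) := if_pos hs
        _ ≤ ENNReal.ofReal (∑ i ∈ J, μ (c i)) := ENNReal.ofReal_le_ofReal (hμsub s J c hJ)
        _ = ∑ i ∈ J, ENNReal.ofReal (μ (c i)) :=
            ENNReal.ofReal_sum_of_nonneg (fun i _ => hμ0 _)
        _ = ∑ i ∈ J, m (c i) := Finset.sum_congr rfl fun i _ => (if_pos (hall i)).symm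
        _ ≤ ∑' i, m (c i) := ENNReal.sum_le_tsum J
    · push_neg at hall
      obtain ⟨i, hi⟩ := hall
      have htop : m (c i) = ∞ := if_neg hi
      exact le_trans le_top (htop ▸ ENNReal.le_tsum i)
  have hcar : ordersMeasurableSpace X ≤ κ.caratheodory := by
    refine MeasurableSpace.generateFrom_le ?_
    rintro u ⟨l, hl, rfl⟩
    refine OuterMeasure.ofFunction_caratheodory fun v => ?_
    by_cases hv : v ∈ Cyl X
    · have h1 := inter_mem_Cyl hv (generator_mem_Cyl (X := X) l)
      have h2 := diff_mem_Cyl hv (generator_mem_Cyl (X := X) l)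
      rw [hm]
      simp only [if_pos h1, if_pos h2, if_pos hv]
      rw [← ENNReal.ofReal_add (hμ0 _) (hμ0 _), hμadd v _]
    · have : m v = ∞ := if_neg hv
      rw [this]
      exact le_top
  refine ⟨κ.toMeasure hcar, ⟨?_⟩, ?_⟩
  · rw [toMeasure_apply κ hcar MeasurableSet.univ, hκcyl _ (univ_mem_Cyl (X := X)), hm]
    simp only [if_pos (univ_mem_Cyl (X := X))]
    rw [hμuniv, ENNReal.ofReal_one]
  · intro A hA x hx
    rw [toMeasure_apply κ hcar (measurableSet_topEvent A x hx),
      hκcyl _ (topEvent_mem_Cyl A x hx), hm]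
    simp only [if_pos (topEvent_mem_Cyl A x hx)]
    rw [hμE A hA x hx]


end MR

/-- McFadden–Richter for arbitrary (possibly infinite) sets of alternatives: a
stochastic choice dataset is rationalizable by a probability measure over strict
total orders if and only if it satisfies the Axiom of Revealed Stochastic
Preference. -/
theorem stochastic_rationalizability_infinite {X : Type*}
    (𝒜 : Set (Finset X)) (P : Finset X → X → ℝ) (hP : IsStochasticDataset 𝒜 P) :
    StochRationalizable 𝒜 P ↔ ARSP 𝒜 P :=
  ⟨fun h => MR.forward 𝒜 P hP h, fun h => MR.backward 𝒜 P hP h⟩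
end

section
/- In any finite set X of alternatives, a stochastic choice dataset P is rationalizable by a probability distribution over the strict total orders of X if and only if it satisfies the Axiom of Revealed Stochastic Preference. -/
open MeasureTheory

attribute [local instance] Classical.propDecidable

/-! ### Auxiliary material -/

section Aux

variable {X : Type*}

noncomputable instance [Fintype X] : Fintype (StrictTotalOrders X) := Subtype.fintype _

instance [Fintype X] : Nonempty (StrictTotalOrders X) := by
  classical
  let e := Fintype.equivFin X
  refine ⟨⟨fun a b => e a < e b, fun a => lt_irrefl _, fun a b c => lt_trans, fun a b hab => ?_⟩⟩
  rcases lt_or_gt_of_ne (fun h : e a = e b => hab (e.injective h)) with h | h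
  · exact Or.inl h
  · exact Or.inr h

lemma MR.measurable_top [Fintype X] (A : Finset X) (x : X) :
    MeasurableSet {π : StrictTotalOrders X | ∀ y ∈ A, y ≠ x → π.1 x y} := by
  classical
  have : {π : StrictTotalOrders X | ∀ y ∈ A, y ≠ x → π.1 x y}
      = ⋂ y ∈ (↑(A.erase x) : Set X), {π : StrictTotalOrders X | π.1 x y} := by
    ext π
    simp only [Set.mem_iInter, Set.mem_setOf_eq, Finset.coe_erase, Set.mem_diff,
      Finset.mem_coe, Set.mem_singleton_iff]
    constructor
    · rintro h y ⟨hy, hyx⟩; exact h y hy hyx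
    · intro h y hy hyx; exact h y ⟨hy, hyx⟩
  rw [this]
  refine MeasurableSet.biInter (Set.to_countable _) fun y hy => ?_
  have hyx : y ≠ x := by
    simp only [Finset.coe_erase, Set.mem_diff, Set.mem_singleton_iff] at hy; exact hy.2
  refine MeasurableSpace.measurableSet_generateFrom ⟨[x, y], by simp [Ne.symm hyx], ?_⟩
  ext π; simp [List.Chain', List.isChain_pair]

lemma MR.exists_top_s11 (π : StrictTotalOrders X) (A : Finset X) (hA : A.Nonempty) :
    ∃ x ∈ A, ∀ y ∈ A, y ≠ x → π.1 x y := by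
  classical
  obtain ⟨hirr, htr, htot⟩ := π.2
  induction A using Finset.induction with
  | empty => exact absurd hA (by simp)
  | @insert a s ha ih =>
    rcases s.eq_empty_or_nonempty with rfl | hs
    · exact ⟨a, by simp, by simp⟩
    · obtain ⟨x, hx, hxtop⟩ := ih hs
      by_cases hax : a = x
      · subst hax
        refine ⟨a, by simp, fun y hy hyx => ?_⟩
        rcases Finset.mem_insert.1 hy with rfl | hy
        · exact absurd rfl hyx
        · exact hxtop y hy hyx
      · rcases htot a x hax with h | h
        · refine ⟨a, by simp, fun y hy hya => ?_⟩
          rcases Finset.mem_insert.1 hy with rfl | hy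
          · exact absurd rfl hya
          · by_cases hyx : y = x
            · subst hyx; exact h
            · exact htr _ _ _ h (hxtop y hy hyx)
        · refine ⟨x, Finset.mem_insert_of_mem hx, fun y hy hyx => ?_⟩
          rcases Finset.mem_insert.1 hy with rfl | hy
          · exact h
          · exact hxtop y hy hyx

lemma MR.top_unique_s11 (π : StrictTotalOrders X) (A : Finset X) {x x' : X}
    (hx : x ∈ A) (hx' : x' ∈ A)
    (h : ∀ y ∈ A, y ≠ x → π.1 x y) (h' : ∀ y ∈ A, y ≠ x' → π.1 x' y) : x = x' := by
  by_contra hne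
  obtain ⟨hirr, htr, _⟩ := π.2
  exact hirr x (htr _ _ _ (h x' hx' (Ne.symm hne)) (h' x hx hne))

lemma MR.sum_top_indicator (π : StrictTotalOrders X) (A : Finset X) (hA : A.Nonempty) :
    ∑ x ∈ A, (if (∀ y ∈ A, y ≠ x → π.1 x y) then (1:ℝ) else 0) = 1 := by
  classical
  obtain ⟨x₀, hx₀, htop⟩ := MR.exists_top_s11 π A hA
  rw [Finset.sum_eq_single_of_mem x₀ hx₀, if_pos htop]
  intro b hb hbx
  rw [if_neg]
  intro hbtop
  exact hbx (MR.top_unique_s11 π A hb hx₀ hbtop htop)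

/-- The type of (menu, choice) pairs in the domain of the dataset. -/
def MRPair {X : Type*} (𝒜 : Set (Finset X)) : Type _ :=
  {d : Finset X × X // d.1 ∈ 𝒜 ∧ d.2 ∈ d.1}

noncomputable instance [Fintype X] (𝒜 : Set (Finset X)) : Fintype (MRPair 𝒜) :=
  Subtype.fintype _

end Aux

section Key

variable {X : Type*} [Fintype X] {𝒜 : Set (Finset X)} {P : Finset X → X → ℝ}

/-- the vector of choice probabilities -/
noncomputable def MR.pvec (P : Finset X → X → ℝ) : MRPair 𝒜 → ℝ := fun d => P d.1.1 d.1.2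

/-- the 0/1 vector recording which choices are revealed by the order `π` -/
noncomputable def MR.evec (π : StrictTotalOrders X) : MRPair 𝒜 → ℝ := fun d =>
  if (∀ y ∈ d.1.1, y ≠ d.1.2 → π.1 d.1.2 y) then 1 else 0

lemma MR.key_nat (hAR : ARSP 𝒜 P) (k : MRPair 𝒜 → ℕ) :
    ∃ π : StrictTotalOrders X,
      ∑ d : MRPair 𝒜, (k d : ℝ) * MR.pvec P d ≤ ∑ d : MRPair 𝒜, (k d : ℝ) * MR.evec π d := by
  classical
  set l : List (MRPair 𝒜) :=
    (Finset.univ : Finset (MRPair 𝒜)).toList.flatMap (fun d => List.replicate (k d) d) with hl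
  have key : ∀ g : MRPair 𝒜 → ℝ,
      ∑ i : Fin l.length, g (l.get i) = ∑ d : MRPair 𝒜, (k d : ℝ) * g d := by
    intro g
    have h1 : (l.map g).sum = ∑ i : Fin l.length, g (l.get i) := by
      conv_lhs => rw [← List.ofFn_get l]
      rw [List.map_ofFn, List.sum_ofFn]
      rfl
    have h2 : (l.map g).sum = ∑ d : MRPair 𝒜, (k d : ℝ) * g d := by
      rw [hl, List.map_flatMap, List.flatMap_def, List.sum_flatten, List.map_map]
      rw [show ((fun l => List.sum l) ∘ fun d => List.map g (List.replicate (k d) d))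
          = fun d => (k d : ℝ) * g d from ?_, Finset.sum_map_toList]
      funext d
      simp only [Function.comp_apply, List.map_replicate, List.sum_replicate, nsmul_eq_mul]
    rw [← h1, h2]
  obtain ⟨π, hπ⟩ := hAR l.length (fun i => (l.get i).1.1) (fun i => (l.get i).1.2)
    (fun i => (l.get i).2)
  refine ⟨π, ?_⟩
  have hR : ((Finset.univ.filter fun i : Fin l.length =>
        ∀ y ∈ (l.get i).1.1, y ≠ (l.get i).1.2 → π.1 ((l.get i).1.2) y).card : ℝ)
      = ∑ i : Fin l.length, MR.evec (𝒜 := 𝒜) π (l.get i) := by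
    rw [← Finset.sum_boole]
    refine Finset.sum_congr rfl fun i _ => ?_
    exact (if_congr Iff.rfl rfl rfl).symm
  calc ∑ d : MRPair 𝒜, (k d : ℝ) * MR.pvec P d
      = ∑ i : Fin l.length, P ((l.get i).1.1) ((l.get i).1.2) := (key (MR.pvec P)).symm
    _ ≤ _ := hπ
    _ = ∑ i : Fin l.length, MR.evec (𝒜 := 𝒜) π (l.get i) := by
      rw [← hR]; congr!
    _ = ∑ d : MRPair 𝒜, (k d : ℝ) * MR.evec π d := key (MR.evec π)

lemma MR.pair_sum (f : Finset X → X → ℝ) :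
    ∑ d : MRPair 𝒜, f d.1.1 d.1.2
      = ∑ A ∈ Finset.univ.filter (fun A : Finset X => A ∈ 𝒜), ∑ x ∈ A, f A x := by
  classical
  rw [Finset.sum_sigma']
  refine (Finset.sum_bij (fun q hq => (⟨(q.1, q.2),
      (Finset.mem_filter.1 (Finset.mem_sigma.1 hq).1).2, (Finset.mem_sigma.1 hq).2⟩ : MRPair 𝒜))
    (fun a ha => Finset.mem_univ _) ?_ ?_ ?_).symm
  · intro a ha b hb hab
    have h1 := congrArg (fun d : MRPair 𝒜 => d.1) hab
    simp only [Prod.mk.injEq] at h1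
    obtain ⟨q1, q2⟩ := a; obtain ⟨r1, r2⟩ := b
    obtain ⟨h2, h3⟩ := h1
    subst h2; subst h3; rfl
  · intro d hd
    exact ⟨⟨d.1.1, d.1.2⟩, Finset.mem_sigma.2 ⟨Finset.mem_filter.2 ⟨Finset.mem_univ _, d.2.1⟩,
      d.2.2⟩, rfl⟩
  · intro a ha; rfl

lemma MR.key_sep (hP : IsStochasticDataset 𝒜 P) (hAR : ARSP 𝒜 P) (lam : MRPair 𝒜 → ℝ) :
    ∃ π : StrictTotalOrders X,
      ∑ d : MRPair 𝒜, lam d * MR.pvec P d ≤ ∑ d : MRPair 𝒜, lam d * MR.evec π d := by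
  classical
  have hpvec0 : ∀ d : MRPair 𝒜, 0 ≤ MR.pvec P d := fun d => (hP d.1.1 d.2.1).2.1 d.1.2 d.2.2
  have hNE : (Finset.univ : Finset (StrictTotalOrders X)).Nonempty := Finset.univ_nonempty
  have hM : ∀ μ : MRPair 𝒜 → ℝ, (∀ d, 0 ≤ μ d) →
      ∑ d : MRPair 𝒜, μ d * MR.pvec P d
        ≤ Finset.univ.sup' hNE (fun π => ∑ d : MRPair 𝒜, μ d * MR.evec π d) := by
    intro μ hμ
    refine le_of_forall_pos_le_add fun ε hε => ?_
    obtain ⟨N, hN⟩ := exists_nat_gt (max ((Fintype.card (MRPair 𝒜) : ℝ) / ε) 0)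
    have hN0 : (0:ℝ) < N := lt_of_le_of_lt (le_max_right _ _) hN
    have hcard : (Fintype.card (MRPair 𝒜) : ℝ) ≤ N * ε := by
      have h6 := lt_of_le_of_lt (le_max_left _ _) hN
      have h7 := (div_lt_iff₀ hε).1 h6
      linarith
    obtain ⟨π, hπ⟩ := MR.key_nat hAR (fun d => ⌈μ d * N⌉₊)
    have hub : ∀ d : MRPair 𝒜, ((⌈μ d * N⌉₊ : ℕ) : ℝ) ≤ μ d * N + 1 := fun d =>
      (Nat.ceil_lt_add_one (mul_nonneg (hμ d) (Nat.cast_nonneg N))).le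
    have hlb : ∀ d : MRPair 𝒜, μ d * N ≤ ((⌈μ d * N⌉₊ : ℕ) : ℝ) := fun d => Nat.le_ceil _
    have h1 : (N:ℝ) * ∑ d : MRPair 𝒜, μ d * MR.pvec P d
        ≤ ∑ d : MRPair 𝒜, ((⌈μ d * N⌉₊ : ℕ) : ℝ) * MR.pvec P d := by
      rw [Finset.mul_sum]
      refine Finset.sum_le_sum fun d _ => ?_
      have h8 := mul_le_mul_of_nonneg_right (hlb d) (hpvec0 d)
      nlinarith [h8]
    have hevec01 : ∀ d : MRPair 𝒜, 0 ≤ MR.evec (𝒜 := 𝒜) π d ∧ MR.evec (𝒜 := 𝒜) π d ≤ 1 := by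
      intro d; unfold MR.evec; split <;> norm_num
    have h2 : ∑ d : MRPair 𝒜, ((⌈μ d * N⌉₊ : ℕ) : ℝ) * MR.evec π d
        ≤ (N:ℝ) * (∑ d : MRPair 𝒜, μ d * MR.evec π d) + Fintype.card (MRPair 𝒜) := by
      calc ∑ d : MRPair 𝒜, ((⌈μ d * N⌉₊ : ℕ) : ℝ) * MR.evec π d
          ≤ ∑ d : MRPair 𝒜, ((N:ℝ) * (μ d * MR.evec π d) + 1) := by
            refine Finset.sum_le_sum fun d _ => ?_
            have h3 := mul_le_mul_of_nonneg_right (hub d) (hevec01 d).1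
            have h4 := (hevec01 d).2
            nlinarith [h3, h4, (hevec01 d).1]
        _ = (N:ℝ) * (∑ d : MRPair 𝒜, μ d * MR.evec π d) + Fintype.card (MRPair 𝒜) := by
            rw [Finset.sum_add_distrib, ← Finset.mul_sum, Finset.sum_const, Finset.card_univ,
              nsmul_eq_mul, mul_one]
    have h5 : ∑ d : MRPair 𝒜, μ d * MR.evec π d
        ≤ Finset.univ.sup' hNE (fun π => ∑ d : MRPair 𝒜, μ d * MR.evec π d) :=
      Finset.le_sup' (fun π : StrictTotalOrders X => ∑ d : MRPair 𝒜, μ d * MR.evec π d)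
        (Finset.mem_univ π)
    have hfin : (N:ℝ) * (∑ d : MRPair 𝒜, μ d * MR.pvec P d)
        ≤ (N:ℝ) * (Finset.univ.sup' hNE (fun π => ∑ d : MRPair 𝒜, μ d * MR.evec π d) + ε) := by
      nlinarith [h1, hπ, h2, h5, hcard, hN0]
    exact le_of_mul_le_mul_left hfin hN0
  set C : ℝ := ∑ d : MRPair 𝒜, |lam d| with hC
  set μ : MRPair 𝒜 → ℝ := fun d => lam d + C with hμdef
  have hμ0 : ∀ d : MRPair 𝒜, 0 ≤ μ d := by
    intro d
    have h1 : |lam d| ≤ C :=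
      Finset.single_le_sum (f := fun d : MRPair 𝒜 => |lam d|) (fun d _ => abs_nonneg _)
        (Finset.mem_univ d)
    have h2 := neg_abs_le (lam d)
    simp only [hμdef]; linarith
  have hsump : ∑ d : MRPair 𝒜, MR.pvec P d
      = ((Finset.univ.filter (fun A : Finset X => A ∈ 𝒜)).card : ℝ) := by
    rw [show ∑ d : MRPair 𝒜, MR.pvec P d = ∑ d : MRPair 𝒜, P d.1.1 d.1.2 from rfl, MR.pair_sum]
    rw [Finset.sum_congr rfl (fun A hA => (hP A (Finset.mem_filter.1 hA).2).2.2)]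
    simp
  have hsume : ∀ π : StrictTotalOrders X, ∑ d : MRPair 𝒜, MR.evec (𝒜 := 𝒜) π d
      = ((Finset.univ.filter (fun A : Finset X => A ∈ 𝒜)).card : ℝ) := by
    intro π
    have hps := MR.pair_sum (𝒜 := 𝒜)
      (fun A x => if (∀ y ∈ A, y ≠ x → π.1 x y) then (1:ℝ) else 0)
    rw [show ∑ d : MRPair 𝒜, MR.evec (𝒜 := 𝒜) π d = ∑ d : MRPair 𝒜,
      (fun A x => if (∀ y ∈ A, y ≠ x → π.1 x y) then (1:ℝ) else 0) d.1.1 d.1.2 from rfl,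
      hps]
    calc ∑ A ∈ Finset.univ.filter (fun A : Finset X => A ∈ 𝒜),
          ∑ x ∈ A, (if ∀ y ∈ A, y ≠ x → π.1 x y then (1:ℝ) else 0)
        = ∑ A ∈ Finset.univ.filter (fun A : Finset X => A ∈ 𝒜), (1:ℝ) :=
          Finset.sum_congr rfl (fun A hA => by
            convert MR.sum_top_indicator π A (hP A (Finset.mem_filter.1 hA).2).1 using 3)
      _ = ((Finset.univ.filter (fun A : Finset X => A ∈ 𝒜)).card : ℝ) := by
          rw [Finset.sum_const, nsmul_eq_mul, mul_one]
  obtain ⟨π, -, hπS⟩ := Finset.exists_mem_eq_sup' hNE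
    (fun π : StrictTotalOrders X => ∑ d : MRPair 𝒜, μ d * MR.evec π d)
  refine ⟨π, ?_⟩
  have hM' := hM μ hμ0
  rw [hπS] at hM'
  have e1 : ∑ d : MRPair 𝒜, μ d * MR.pvec P d
      = ∑ d : MRPair 𝒜, lam d * MR.pvec P d + C * ∑ d : MRPair 𝒜, MR.pvec P d := by
    simp only [hμdef]; simp_rw [add_mul]; rw [Finset.sum_add_distrib, Finset.mul_sum]
  have e2 : ∑ d : MRPair 𝒜, μ d * MR.evec π d
      = ∑ d : MRPair 𝒜, lam d * MR.evec π d + C * ∑ d : MRPair 𝒜, MR.evec π d := by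
    simp only [hμdef]; simp_rw [add_mul]; rw [Finset.sum_add_distrib, Finset.mul_sum]
  have e3 := hsume π
  rw [hsump] at e1
  rw [e3] at e2
  linarith [hM', e1, e2]

end Key

section Main

open ENNReal

variable {X : Type*} [Fintype X] {𝒜 : Set (Finset X)} {P : Finset X → X → ℝ}

lemma MR.backward_s11 (hP : IsStochasticDataset 𝒜 P) (hAR : ARSP 𝒜 P) :
    StochRationalizable 𝒜 P := by
  classical
  have hmem : MR.pvec (𝒜 := 𝒜) P ∈ convexHull ℝ (Set.range (MR.evec (𝒜 := 𝒜) (X := X))) := by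
    by_contra hout
    obtain ⟨f, u, hfs, hfp⟩ := geometric_hahn_banach_closed_point
      (convex_convexHull ℝ _) ((Set.finite_range _).isClosed_convexHull ℝ) hout
    have hf : ∀ v : MRPair 𝒜 → ℝ,
        f v = ∑ d : MRPair 𝒜, v d * f (Pi.single d (1:ℝ) : MRPair 𝒜 → ℝ) := by
      intro v
      have hv : v = ∑ d : MRPair 𝒜, v d • (Pi.single d (1:ℝ) : MRPair 𝒜 → ℝ) := by
        simp only [← Pi.single_smul, smul_eq_mul, mul_one, Finset.univ_sum_single]
      conv_lhs => rw [hv]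
      rw [map_sum]
      simp only [_root_.map_smul, smul_eq_mul]
    obtain ⟨π, hπ⟩ := MR.key_sep hP hAR
      (fun d => f (Pi.single d (1:ℝ) : MRPair 𝒜 → ℝ))
    have h1 : f (MR.evec (𝒜 := 𝒜) π) < u :=
      hfs _ (subset_convexHull ℝ _ ⟨π, rfl⟩)
    have h2 : f (MR.pvec P) ≤ f (MR.evec (𝒜 := 𝒜) π) := by
      rw [hf, hf]
      have e : ∀ g : MRPair 𝒜 → ℝ,
          ∑ d : MRPair 𝒜, g d * f (Pi.single d (1:ℝ) : MRPair 𝒜 → ℝ)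
            = ∑ d : MRPair 𝒜, f (Pi.single d (1:ℝ) : MRPair 𝒜 → ℝ) * g d := fun g =>
        Finset.sum_congr rfl (fun d _ => mul_comm _ _)
      rw [e, e]
      exact hπ
    linarith
  rw [mem_convexHull_iff_exists_fintype] at hmem
  obtain ⟨ι, hι, w, z, hw0, hw1, hz, hx⟩ := hmem
  choose σ hσ using fun i => Set.mem_range.1 (hz i)
  refine ⟨∑ i : ι, ENNReal.ofReal (w i) • Measure.dirac (σ i), ?_, ?_⟩
  · constructor
    rw [Measure.finset_sum_apply]
    simp only [Measure.smul_apply, smul_eq_mul, Measure.dirac_apply' _ MeasurableSet.univ]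
    simp only [Set.indicator_univ, Pi.one_apply, mul_one]
    rw [← ENNReal.ofReal_sum_of_nonneg (fun i _ => hw0 i), hw1, ENNReal.ofReal_one]
  · intro A hA x hx'
    set S := {π : StrictTotalOrders X | ∀ y ∈ A, y ≠ x → π.1 x y} with hSdef
    have hS := MR.measurable_top (X := X) A x
    rw [Measure.finset_sum_apply]
    simp only [Measure.smul_apply, smul_eq_mul]
    rw [Finset.sum_congr rfl (fun i _ => by rw [Measure.dirac_apply' _ hS])]
    have hterm : ∀ i : ι, ENNReal.ofReal (w i) *
        S.indicator (1 : StrictTotalOrders X → ℝ≥0∞) (σ i)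
        = ENNReal.ofReal (w i * z i ⟨(A, x), hA, hx'⟩) := by
      intro i
      by_cases hmem2 : σ i ∈ S
      · rw [Set.indicator_of_mem hmem2, Pi.one_apply, mul_one]
        have hz1 : z i ⟨(A, x), hA, hx'⟩ = 1 := by
          rw [← hσ i]; exact if_pos hmem2
        rw [hz1, mul_one]
      · rw [Set.indicator_of_notMem hmem2, mul_zero]
        have hz0 : z i ⟨(A, x), hA, hx'⟩ = 0 := by
          rw [← hσ i]; exact if_neg hmem2
        rw [hz0, mul_zero, ENNReal.ofReal_zero]
    rw [Finset.sum_congr rfl (fun i _ => hterm i)]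
    have hznn : ∀ i : ι, 0 ≤ z i ⟨(A, x), hA, hx'⟩ := by
      intro i
      rw [← hσ i]
      unfold MR.evec
      split <;> norm_num
    rw [← ENNReal.ofReal_sum_of_nonneg (fun i _ => mul_nonneg (hw0 i) (hznn i))]
    congr 1
    have h4 := congrFun hx (⟨(A, x), hA, hx'⟩ : MRPair 𝒜)
    rw [show (∑ i, w i • z i) (⟨(A, x), hA, hx'⟩ : MRPair 𝒜) = ∑ i, (w i • z i) (⟨(A, x), hA, hx'⟩ : MRPair 𝒜) from Finset.sum_apply _ _ _] at h4
    change ∑ i, w i * z i ⟨(A, x), hA, hx'⟩ = _ at h4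
    exact h4

lemma MR.forward_s11 (hP : IsStochasticDataset 𝒜 P) (h : StochRationalizable 𝒜 P) : ARSP 𝒜 P := by
  classical
  obtain ⟨ν, hprob, hmatch⟩ := h
  intro n A x hi
  set S : Fin n → Set (StrictTotalOrders X) :=
    fun i => {π | ∀ y ∈ A i, y ≠ x i → π.1 (x i) y} with hSdef
  have hS : ∀ i, MeasurableSet (S i) := fun i => MR.measurable_top _ _
  have hνS : ∀ i, ν (S i) = ENNReal.ofReal (P (A i) (x i)) := fun i =>
    hmatch (A i) (hi i).1 (x i) (hi i).2
  obtain ⟨π₀, -, hπ₀⟩ := Finset.exists_max_image (Finset.univ : Finset (StrictTotalOrders X))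
    (fun π => (Finset.univ.filter fun i : Fin n => π ∈ S i).card) Finset.univ_nonempty
  refine ⟨π₀, ?_⟩
  set N : ℕ := (Finset.univ.filter fun i : Fin n => π₀ ∈ S i).card with hN
  have hsum : ∑ i, ν (S i) ≤ (N : ℝ≥0∞) := by
    have h1 : ∑ i, ν (S i)
        = ∑ i, ∫⁻ π, (S i).indicator (fun _ => (1:ℝ≥0∞)) π ∂ν :=
      Finset.sum_congr rfl fun i _ => (lintegral_indicator_one (hS i)).symm
    rw [h1, ← lintegral_finset_sum Finset.univ
      (fun i _ => (measurable_const.indicator (hS i)))]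
    calc ∫⁻ π, ∑ i, (S i).indicator (fun _ => (1:ℝ≥0∞)) π ∂ν ≤ ∫⁻ _, (N : ℝ≥0∞) ∂ν := by
          refine lintegral_mono fun π => ?_
          have h2 : ∑ i, (S i).indicator (fun _ => (1:ℝ≥0∞)) π
              = ((Finset.univ.filter fun i : Fin n => π ∈ S i).card : ℝ≥0∞) := by
            rw [← Finset.sum_boole]
            refine Finset.sum_congr rfl fun i _ => ?_
            rw [Set.indicator_apply]
          rw [h2]
          exact Nat.cast_le.2 (hπ₀ π (Finset.mem_univ π))
      _ = (N : ℝ≥0∞) := by rw [lintegral_const, measure_univ, mul_one]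
  have hPnn : ∀ i, 0 ≤ P (A i) (x i) := fun i => (hP (A i) (hi i).1).2.1 (x i) (hi i).2
  have hfin : ∀ i ∈ Finset.univ, ν (S i) ≠ ∞ := fun i _ => by
    rw [hνS i]; exact ENNReal.ofReal_ne_top
  have hterm : ∀ i ∈ Finset.univ, (ν (S i)).toReal = P (A i) (x i) := fun i _ => by
    rw [hνS i, ENNReal.toReal_ofReal (hPnn i)]
  have hfinal : ∑ i, P (A i) (x i) ≤ (N : ℝ) := by
    calc ∑ i, P (A i) (x i) = (∑ i, ν (S i)).toReal := by
          rw [ENNReal.toReal_sum hfin]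
          exact (Finset.sum_congr rfl hterm).symm
      _ ≤ ((N : ℝ≥0∞)).toReal := ENNReal.toReal_mono (ENNReal.natCast_ne_top N) hsum
      _ = (N : ℝ) := by simp
  refine hfinal.trans ?_
  rw [hN]
  simp only [hSdef, Set.mem_setOf_eq]
  exact le_of_eq (by congr!)

end Main

/-- McFadden–Richter theorem for a finite set of alternatives: a stochastic choice
dataset is rationalizable by a probability distribution over the strict total orders
of `X` if and only if it satisfies the Axiom of Revealed Stochastic Preference. -/
theorem stochastic_rationalizability_finite {X : Type*} [Fintype X]
    (𝒜 : Set (Finset X)) (P : Finset X → X → ℝ) (hP : IsStochasticDataset 𝒜 P) :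
    StochRationalizable 𝒜 P ↔ ARSP 𝒜 P :=
  ⟨fun h => MR.forward_s11 hP h, fun h => MR.backward_s11 hP h⟩
end
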